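/- For every integer n ≥ 1 and every prime p ≥ n+2, if δ_0(n,p) > δ_1(n,p) then δ_1(n, p+1) > δ_1(n, p). -/

import Mathlib

/-- `Llcm n m` is the least common multiple of the integers strictly between `n` and `m`,
i.e. of `{n+1, ..., m-1}`. -/
def Llcm (n m : ℕ) : ℕ := (Finset.Ioo n m).lcm id

/-- `delta r n m` is the density `δ_r(n,m)` of positive integers with exactly `r`
divisors in the open interval `(n, m)`: the proportion of `x ∈ {1, ..., Llcm n m}`
having exactly `r` divisors `d` with `n < d < m`. -/
def delta (r n m : ℕ) : ℚ :=
  (((Finset.Icc 1 (Llcm n m)).filter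
      (fun x => ((Finset.Ioo n m).filter (fun d => d ∣ x)).card = r)).card : ℚ) /
    (Llcm n m : ℚ)

/-- A prime dividing a finite lcm divides one of the terms. -/
lemma prime_dvd_finset_lcm {p : ℕ} (hp : p.Prime) (s : Finset ℕ) :
    p ∣ s.lcm id → ∃ a ∈ s, p ∣ a := by
  classical
  induction s using Finset.induction_on with
  | empty =>
      intro h
      simp only [Finset.lcm_empty] at h
      exact absurd (Nat.dvd_one.mp (by exact_mod_cast h)) hp.ne_one
  | insert _ _ hb ih =>
      intro h
      rw [Finset.lcm_insert] at h
      rw [lcm_eq_nat_lcm] at h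
      have h2 := h.trans (Nat.lcm_dvd_mul _ _)
      rcases hp.dvd_mul.mp h2 with hb' | hs
      · exact ⟨_, Finset.mem_insert_self _ _, hb'⟩
      · obtain ⟨a, ha, hpa⟩ := ih hs
        exact ⟨a, Finset.mem_insert_of_mem ha, hpa⟩

/-- `(x-1) % p = p - 1` iff `p ∣ x`, for `x ≥ 1`. -/
lemma mod_pred_eq_iff {p x : ℕ} (hp : 0 < p) (hx : 1 ≤ x) :
    (x - 1) % p = p - 1 ↔ p ∣ x := by
  have hr : (x - 1) % p < p := Nat.mod_lt _ hp
  have hcong : x ≡ (x - 1) % p + 1 [MOD p] := by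
    conv_lhs => rw [← Nat.sub_add_cancel hx]
    exact (Nat.ModEq.add_right 1 (Nat.mod_modEq _ _)).symm
  have hdvd : p ∣ x ↔ p ∣ ((x - 1) % p + 1) := hcong.dvd_iff dvd_rfl
  rw [hdvd]
  constructor
  · intro h; rw [h, Nat.sub_add_cancel hp]
  · intro hd
    have h1 := Nat.le_of_dvd (by omega) hd
    omega

/-- For every `n ≥ 1` and every prime `p ≥ n+2`, if `δ_0(n,p) > δ_1(n,p)`
then `δ_1(n, p+1) > δ_1(n, p)`. -/
theorem delta_one_increases_at_prime (n p : ℕ) (hn : 1 ≤ n) (hp : p.Prime)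
    (hpn : n + 2 ≤ p) (h : delta 1 n p < delta 0 n p) :
    delta 1 n p < delta 1 n (p + 1) := by
  classical
  set L := Llcm n p with hLdef
  have hdvdL : ∀ d ∈ Finset.Ioo n p, d ∣ L := fun d hd => Finset.dvd_lcm hd
  have hLpos : 0 < L := by
    rcases Nat.eq_zero_or_pos L with h0 | h0
    · exfalso
      rw [hLdef, Llcm, Finset.lcm_eq_zero_iff] at h0
      simp only [Set.mem_image, Finset.mem_coe, Finset.mem_Ioo, id_eq] at h0
      obtain ⟨a, ⟨ha1, ha2⟩, ha0⟩ := h0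
      omega
    · exact h0
  have hpnd : ¬ p ∣ L := by
    intro hd
    obtain ⟨a, ha, hpa⟩ := prime_dvd_finset_lcm hp _ hd
    rw [Finset.mem_Ioo] at ha
    have := Nat.le_of_dvd (by omega) hpa
    omega
  have hcop : Nat.Coprime p L := (Nat.Prime.coprime_iff_not_dvd hp).mpr hpnd
  have hcopLp : Nat.Coprime L p := hcop.symm
  have hLp : 0 < L * p := Nat.mul_pos hLpos hp.pos
  -- the interval (n, p+1) is (n, p) together with p
  have hIoo : Finset.Ioo n (p+1) = insert p (Finset.Ioo n p) := by
    rw [Finset.Ioo_insert_right (show n < p by omega)]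
    ext x
    simp only [Finset.mem_Ioo, Finset.mem_Ioc]
    omega
  have hL' : Llcm n (p+1) = L * p := by
    have hfold : (Finset.Ioo n p).lcm id = L := rfl
    rw [Llcm, hIoo, Finset.lcm_insert, lcm_eq_nat_lcm, id_eq, hfold, hcop.lcm_eq_mul,
      Nat.mul_comm]
  -- abbreviation for the divisor count in (n, p)
  have hcnt_congr : ∀ x y : ℕ, x % L = y % L →
      ((Finset.Ioo n p).filter (fun d => d ∣ x)).card
        = ((Finset.Ioo n p).filter (fun d => d ∣ y)).card := by
    intro x y hxy
    congr 1
    apply Finset.filter_congr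
    intro d hd
    exact Nat.ModEq.dvd_iff hxy (hdvdL d hd)
  have hcnt2 : ∀ x : ℕ, ((Finset.Ioo n (p+1)).filter (fun d => d ∣ x)).card
      = ((Finset.Ioo n p).filter (fun d => d ∣ x)).card + (if p ∣ x then 1 else 0) := by
    intro x
    rw [hIoo, Finset.filter_insert]
    split_ifs with hx
    · rw [Finset.card_insert_of_notMem]
      intro hmem
      have := (Finset.mem_filter.mp hmem).1
      simp [Finset.mem_Ioo] at this
    · simp
  -- shift from Icc 1 L to range L
  have hshift : ∀ r : ℕ, (((Finset.Icc 1 L).filter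
      (fun x => ((Finset.Ioo n p).filter (fun d => d ∣ x)).card = r)).card)
      = (((Finset.range L).filter
      (fun y => ((Finset.Ioo n p).filter (fun d => d ∣ (y+1))).card = r)).card) := by
    intro r
    apply Finset.card_nbij' (fun x => x - 1) (fun y => y + 1)
    · intro a ha
      simp only [Finset.mem_coe, Finset.mem_filter, Finset.mem_Icc] at ha
      simp only [Finset.mem_coe, Finset.mem_filter, Finset.mem_range]
      have heq : a - 1 + 1 = a := by omega
      exact ⟨by omega, by rw [heq]; exact ha.2⟩
    · intro b hb
      simp only [Finset.mem_coe, Finset.mem_filter, Finset.mem_range] at hb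
      simp only [Finset.mem_coe, Finset.mem_filter, Finset.mem_Icc]
      exact ⟨⟨by omega, by omega⟩, hb.2⟩
    · intro a ha
      beta_reduce
      simp only [Finset.mem_coe, Finset.mem_filter, Finset.mem_Icc] at ha
      omega
    · intro b _
      simp
  set b1 := ((Finset.range L).filter
      (fun y => ((Finset.Ioo n p).filter (fun d => d ∣ (y+1))).card = 1)).card with hb1
  set b0 := ((Finset.range L).filter
      (fun y => ((Finset.Ioo n p).filter (fun d => d ∣ (y+1))).card = 0)).card with hb0
  -- main bijective count
  have hmain : (((Finset.Icc 1 (L*p)).filter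
      (fun x => ((Finset.Ioo n (p+1)).filter (fun d => d ∣ x)).card = 1)).card)
      = (((Finset.range L ×ˢ Finset.range p).filter
        (fun q => (((Finset.Ioo n p).filter (fun d => d ∣ (q.1+1))).card = 1 ∧ q.2 ≠ p - 1)
          ∨ (((Finset.Ioo n p).filter (fun d => d ∣ (q.1+1))).card = 0 ∧ q.2 = p - 1))).card) := by
    apply Finset.card_nbij' (fun x => ((x-1) % L, (x-1) % p))
      (fun q => (Nat.chineseRemainder hcopLp q.1 q.2 : ℕ) % (L*p) + 1)
    · intro x hx
      simp only [Finset.mem_coe, Finset.mem_filter, Finset.mem_Icc] at hx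
      obtain ⟨⟨hx1, hx2⟩, hxc⟩ := hx
      rw [hcnt2] at hxc
      have hxev : ((Finset.Ioo n p).filter (fun d => d ∣ x)).card
          = ((Finset.Ioo n p).filter (fun d => d ∣ ((x-1) % L + 1))).card := by
        apply hcnt_congr
        have h1 : (x - 1) % L ≡ (x - 1) [MOD L] := Nat.mod_modEq _ _
        have h2 := (Nat.ModEq.add_right 1 h1).symm
        rwa [Nat.sub_add_cancel hx1] at h2
      simp only [Finset.mem_coe, Finset.mem_filter, Finset.mem_product, Finset.mem_range]
      refine ⟨⟨Nat.mod_lt _ hLpos, Nat.mod_lt _ hp.pos⟩, ?_⟩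
      by_cases hpx : p ∣ x
      · right
        rw [if_pos hpx] at hxc
        exact ⟨by rw [← hxev]; omega, (mod_pred_eq_iff hp.pos hx1).mpr hpx⟩
      · left
        rw [if_neg hpx] at hxc
        refine ⟨by rw [← hxev]; omega, ?_⟩
        intro heq
        exact hpx ((mod_pred_eq_iff hp.pos hx1).mp heq)
    · intro q hq
      beta_reduce
      simp only [Finset.mem_coe, Finset.mem_filter, Finset.mem_product, Finset.mem_range] at hq
      obtain ⟨⟨hq1, hq2⟩, hqc⟩ := hq
      set z := (Nat.chineseRemainder hcopLp q.1 q.2 : ℕ) with hz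
      have hzL : z ≡ q.1 [MOD L] := (Nat.chineseRemainder hcopLp q.1 q.2).2.1
      have hzp : z ≡ q.2 [MOD p] := (Nat.chineseRemainder hcopLp q.1 q.2).2.2
      have hjlt : z % (L*p) < L * p := Nat.mod_lt _ hLp
      simp only [Finset.mem_coe, Finset.mem_filter, Finset.mem_Icc]
      refine ⟨⟨by omega, by omega⟩, ?_⟩
      rw [hcnt2]
      have hmodL : (z % (L*p) + 1) % L = (q.1 + 1) % L := by
        have h1 : z % (L*p) ≡ z [MOD L] :=
          Nat.ModEq.of_dvd ⟨p, rfl⟩ (Nat.mod_modEq z (L*p))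
        exact Nat.ModEq.add_right 1 (h1.trans hzL)
      have hcc : ((Finset.Ioo n p).filter (fun d => d ∣ (z % (L*p) + 1))).card
          = ((Finset.Ioo n p).filter (fun d => d ∣ (q.1+1))).card :=
        hcnt_congr _ _ hmodL
      have hdvdiff : p ∣ (z % (L*p) + 1) ↔ q.2 = p - 1 := by
        rw [← mod_pred_eq_iff hp.pos (by omega : 1 ≤ z % (L*p) + 1)]
        have h1 : (z % (L*p) + 1 - 1) % p = q.2 := by
          simp only [Nat.add_sub_cancel]
          have h2 : z % (L*p) ≡ z [MOD p] :=
            Nat.ModEq.of_dvd ⟨L, Nat.mul_comm L p⟩ (Nat.mod_modEq z (L*p))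
          have h3 : z % (L*p) % p = q.2 % p := h2.trans hzp
          rwa [Nat.mod_eq_of_lt hq2] at h3
        rw [h1]
      rcases hqc with ⟨hc1, hc2⟩ | ⟨hc1, hc2⟩
      · rw [hcc, hc1, if_neg (by rw [hdvdiff]; exact hc2)]
      · rw [hcc, hc1, if_pos (by rw [hdvdiff]; exact hc2)]
    · intro x hx
      beta_reduce
      simp only [Finset.mem_coe, Finset.mem_filter, Finset.mem_Icc] at hx
      obtain ⟨⟨hx1, hx2⟩, _⟩ := hx
      set z := (Nat.chineseRemainder hcopLp ((x-1) % L) ((x-1) % p) : ℕ) with hz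
      have hzL : z ≡ (x-1) % L [MOD L] := (Nat.chineseRemainder hcopLp _ _).2.1
      have hzp : z ≡ (x-1) % p [MOD p] := (Nat.chineseRemainder hcopLp _ _).2.2
      have hzL' : z ≡ x - 1 [MOD L] := hzL.trans (Nat.mod_modEq _ _)
      have hzp' : z ≡ x - 1 [MOD p] := hzp.trans (Nat.mod_modEq _ _)
      have hzLp : z ≡ x - 1 [MOD L * p] :=
        (Nat.modEq_and_modEq_iff_modEq_mul hcopLp).mp ⟨hzL', hzp'⟩
      have h1 : z % (L*p) = (x - 1) % (L*p) := hzLp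
      have h2 : (x - 1) % (L*p) = x - 1 := Nat.mod_eq_of_lt (by omega)
      omega
    · intro q hq
      beta_reduce
      simp only [Finset.mem_coe, Finset.mem_filter, Finset.mem_product, Finset.mem_range] at hq
      obtain ⟨⟨hq1, hq2⟩, _⟩ := hq
      set z := (Nat.chineseRemainder hcopLp q.1 q.2 : ℕ) with hz
      have hzL : z ≡ q.1 [MOD L] := (Nat.chineseRemainder hcopLp q.1 q.2).2.1
      have hzp : z ≡ q.2 [MOD p] := (Nat.chineseRemainder hcopLp q.1 q.2).2.2
      have e1 : (z % (L*p) + 1 - 1) % L = q.1 := by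
        rw [Nat.add_sub_cancel, Nat.mod_mod_of_dvd _ ⟨p, rfl⟩]
        have : z % L = q.1 % L := hzL
        rwa [Nat.mod_eq_of_lt hq1] at this
      have e2 : (z % (L*p) + 1 - 1) % p = q.2 := by
        rw [Nat.add_sub_cancel, Nat.mod_mod_of_dvd _ ⟨L, Nat.mul_comm L p⟩]
        have : z % p = q.2 % p := hzp
        rwa [Nat.mod_eq_of_lt hq2] at this
      rw [e1, e2]
  -- counting the product set
  have hsplit : (((Finset.range L ×ˢ Finset.range p).filter
        (fun q => (((Finset.Ioo n p).filter (fun d => d ∣ (q.1+1))).card = 1 ∧ q.2 ≠ p - 1)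
          ∨ (((Finset.Ioo n p).filter (fun d => d ∣ (q.1+1))).card = 0 ∧ q.2 = p - 1))).card)
      = b1 * (p - 1) + b0 := by
    rw [Finset.filter_or, Finset.card_union_of_disjoint]
    · rw [Finset.filter_product (fun a => ((Finset.Ioo n p).filter (fun d => d ∣ (a+1))).card = 1)
          (fun b => b ≠ p - 1),
        Finset.filter_product (fun a => ((Finset.Ioo n p).filter (fun d => d ∣ (a+1))).card = 0)
          (fun b => b = p - 1),
        Finset.card_product, Finset.card_product]
      have e1 : ((Finset.range p).filter (fun b => b ≠ p - 1)).card = p - 1 := by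
        rw [Finset.filter_ne', Finset.card_erase_of_mem (by simp [Finset.mem_range]; omega),
          Finset.card_range]
      have e2 : ((Finset.range p).filter (fun b => b = p - 1)).card = 1 := by
        rw [Finset.filter_eq', if_pos (by simp [Finset.mem_range]; omega)]
        simp
      rw [e1, e2, ← hb1, ← hb0]
      ring
    · rw [Finset.disjoint_left]
      intro q hq1 hq2
      simp only [Finset.mem_filter] at hq1 hq2
      exact hq1.2.2 hq2.2.2
  -- express both densities explicitly
  have e1 : delta 1 n p = (b1 : ℚ) / (L : ℚ) := by
    unfold delta
    rw [← hLdef, hshift 1, ← hb1]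
  have e0 : delta 0 n p = (b0 : ℚ) / (L : ℚ) := by
    unfold delta
    rw [← hLdef, hshift 0, ← hb0]
  have e2 : delta 1 n (p+1) = ((b1 * (p - 1) + b0 : ℕ) : ℚ) / ((L * p : ℕ) : ℚ) := by
    unfold delta
    rw [hL', hmain, hsplit]
  -- from the hypothesis, b1 < b0
  have hb : b1 < b0 := by
    rw [e1, e0, div_lt_div_iff₀ (by exact_mod_cast hLpos) (by exact_mod_cast hLpos)] at h
    have h' : b1 * L < b0 * L := by exact_mod_cast h
    exact Nat.lt_of_mul_lt_mul_right h'
  -- final computation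
  rw [e1, e2, div_lt_div_iff₀ (by exact_mod_cast hLpos) (by exact_mod_cast hLp)]
  have hnat : b1 * (L * p) < (b1 * (p - 1) + b0) * L := by
    have h1 : b1 * p < b1 * (p - 1) + b0 := by
      obtain ⟨q, rfl⟩ : ∃ q, p = q + 1 := ⟨p - 1, by omega⟩
      simp only [Nat.add_sub_cancel]
      nlinarith [hb]
    nlinarith [h1, hLpos]
  exact_mod_cast hnat
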